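/- Let n ∈ ℕ and let I be a finite nonempty index set. For each i ∈ I let A_i be a real m_i × n matrix, b_i ∈ ℝ^{m_i}, and K_i ⊆ ℝ^{m_i} a proper cone (closed, convex, pointed, with nonempty interior), and set P_i = {x ∈ ℝ^n : A_i x − b_i ∈ K_i}. Let P = {(x, (v_i)_{i∈I}, (λ_i)_{i∈I}) : x = Σ_{i∈I} v_i, Σ_{i∈I} λ_i = 1, λ_i ≥ 0 for all i ∈ I, and A_i v_i − λ_i b_i ∈ K_i for all i ∈ I}. If P_i ≠ ∅ for every i ∈ I, then the projection of P onto the x coordinates is contained in the closure of the convex hull of ⋃_{i∈I} P_i, i.e. proj_x(P) ⊆ cl conv(⋃_{i∈I} P_i). -/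

import Mathlib

open Matrix Filter Topology

/-- If each disjunct `P i = {x | A i x - b i ∈ K i}` (with `K i`
a proper cone) is nonempty, then the projection onto `x` of the hull-reformulation
set is contained in the closure of the convex hull of the union of the disjuncts. -/
theorem proj_hull_subset_closure_conv_union
    {n : ℕ} {I : Type*} [Fintype I] [Nonempty I]
    (m : I → ℕ)
    (A : ∀ i : I, Matrix (Fin (m i)) (Fin n) ℝ)
    (b : ∀ i : I, Fin (m i) → ℝ)
    (K : ∀ i : I, Set (Fin (m i) → ℝ))
    (hKclosed : ∀ i, IsClosed (K i))
    (hKconvex : ∀ i, Convex ℝ (K i))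
    (hKcone : ∀ i, ∀ z ∈ K i, ∀ c : ℝ, 0 ≤ c → c • z ∈ K i)
    (hKpointed : ∀ i, K i ∩ (-(K i)) = {0})
    (hKint : ∀ i, (interior (K i)).Nonempty)
    (hPne : ∀ i, ({x : Fin n → ℝ | A i *ᵥ x - b i ∈ K i}).Nonempty) :
    {x : Fin n → ℝ | ∃ (v : I → (Fin n → ℝ)) (lam : I → ℝ),
        x = ∑ i : I, v i ∧
        ∑ i : I, lam i = 1 ∧
        (∀ i : I, 0 ≤ lam i) ∧
        (∀ i : I, A i *ᵥ v i - lam i • b i ∈ K i)} ⊆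
      closure (convexHull ℝ (⋃ i : I, {x : Fin n → ℝ | A i *ᵥ x - b i ∈ K i})) := by
  classical
  intro x hx
  obtain ⟨v, lam, hxsum, hlamsum, hlamnn, hmem⟩ := hx
  set S : Set (Fin n → ℝ) := ⋃ i : I, {x : Fin n → ℝ | A i *ᵥ x - b i ∈ K i} with hSdef
  choose xb hxb using hPne
  have hadd : ∀ i, ∀ z ∈ K i, ∀ w ∈ K i, z + w ∈ K i := by
    intro i z hz w hw
    have h := hKconvex i hz hw (by norm_num : (0:ℝ) ≤ 1/2) (by norm_num : (0:ℝ) ≤ 1/2)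
      (by norm_num)
    have h2 := hKcone i _ h 2 (by norm_num)
    have he : (2:ℝ) • ((1/2:ℝ) • z + (1/2:ℝ) • w) = z + w := by module
    rwa [he] at h2
  set c : ℝ := (Fintype.card I : ℝ) with hc
  have hc0 : 0 ≤ c := by positivity
  set T : Fin n → ℝ := ∑ i, xb i with hT
  set g : ℝ → (Fin n → ℝ) := fun ε => (1 + c * ε)⁻¹ • (x + ε • T) with hg
  have hgmem : ∀ ε : ℝ, 0 < ε → g ε ∈ convexHull ℝ S := by
    intro ε hε
    have hden : (0:ℝ) < 1 + c * ε := by positivity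
    have hwsum : ∑ i, (lam i + ε) = 1 + c * ε := by
      rw [Finset.sum_add_distrib, hlamsum, Finset.sum_const]
      simp [hc, mul_comm]
    have hrepr : g ε = ∑ i, ((lam i + ε) / (1 + c * ε)) •
        ((lam i + ε)⁻¹ • (v i + ε • xb i)) := by
      have hterm : ∀ i : I, ((lam i + ε) / (1 + c * ε)) •
          ((lam i + ε)⁻¹ • (v i + ε • xb i))
          = (1 + c * ε)⁻¹ • (v i + ε • xb i) := by
        intro i
        have hne : lam i + ε ≠ 0 := ne_of_gt (by linarith [hlamnn i])
        rw [smul_smul]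
        congr 1
        field_simp
      rw [Finset.sum_congr rfl fun i _ => hterm i, ← Finset.smul_sum]
      simp only [hg]
      congr 1
      rw [Finset.sum_add_distrib, ← hxsum, ← Finset.smul_sum, ← hT]
    rw [hrepr]
    apply Convex.sum_mem (convex_convexHull ℝ S)
    · intro i _
      have hne : 0 < lam i + ε := by linarith [hlamnn i]
      positivity
    · rw [← Finset.sum_div, hwsum, div_self (ne_of_gt hden)]
    · intro i _
      apply subset_convexHull ℝ S
      rw [hSdef]
      apply Set.mem_iUnion.2 ⟨i, ?_⟩
      have hnepos : 0 < lam i + ε := by linarith [hlamnn i]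
      have hne : lam i + ε ≠ 0 := ne_of_gt hnepos
      show A i *ᵥ ((lam i + ε)⁻¹ • (v i + ε • xb i)) - b i ∈ K i
      have key : A i *ᵥ ((lam i + ε)⁻¹ • (v i + ε • xb i)) - b i
          = (lam i + ε)⁻¹ • ((A i *ᵥ v i - lam i • b i) + ε • (A i *ᵥ xb i - b i)) := by
        rw [mulVec_smul, mulVec_add, mulVec_smul]
        match_scalars <;> field_simp <;> ring
      rw [key]
      exact hKcone i _ (hadd i _ (hmem i) _ (hKcone i _ (hxb i) ε hε.le)) _
        (inv_nonneg.2 hnepos.le)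
  have ha : Tendsto (fun k : ℕ => ((k : ℝ) + 1)⁻¹) atTop (𝓝 0) := by
    exact tendsto_one_div_add_atTop_nhds_zero_nat.congr (fun k => one_div _)
  have hcg : ContinuousAt g 0 := by
    rw [hg]
    apply ContinuousAt.smul (f := fun ε : ℝ => (1 + c * ε)⁻¹) (g := fun ε : ℝ => x + ε • T)
    · apply ContinuousAt.inv₀
      · fun_prop
      · norm_num
    · fun_prop
  have hg0 : g 0 = x := by simp [hg]
  have h1 : Tendsto (fun k : ℕ => g (((k : ℝ) + 1)⁻¹)) atTop (𝓝 x) := by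
    have := hcg.tendsto.comp ha
    rwa [hg0] at this
  exact mem_closure_of_tendsto h1 (Eventually.of_forall fun k => hgmem _ (by positivity))
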